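/- Let (G,D,⋆) be a probabilistic metric space such that the triangle function ⋆ is sup-continuous. Let f : G → Δ⁺ be any map and A a nonempty subset of G. Then the map x ↦ sup_{y∈A} ( f(y) ⋆ D(x,y) ) is a probabilistic 1-Lipschitz map on G, and it dominates f on A. -/

import Mathlib

open Filter Topology

noncomputable section

/-- `Δ⁺`: distribution functions `F : [-∞,∞] → [0,1]`, nondecreasing, left-continuous
on `ℝ`, with `F(-∞)=0`, `F(+∞)=1` and `F(0)=0`. -/
def IsDistFun (F : EReal → ℝ) : Prop :=
  Monotone F ∧ (∀ t, F t ∈ Set.Icc (0:ℝ) 1) ∧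
  (∀ x : ℝ, ContinuousWithinAt F (Set.Iio (x : EReal)) (x : EReal)) ∧
  F ⊥ = 0 ∧ F ⊤ = 1 ∧ F (0 : EReal) = 0

/-- The step function `H_a`. -/
def Hstep (a : ℝ) : EReal → ℝ := fun t => if t ≤ (a : EReal) then 0 else 1

/-- `H₀`. -/
def H0 : EReal → ℝ := Hstep 0

/-- `H_∞`. -/
def Hinf : EReal → ℝ := fun t => if t = ⊤ then 1 else 0

/-- The condition `A(F,G;h)` : for all `t ∈ (0,1/h)`, `G(t) ≤ F(t+h)+h`. -/
def levyCond (F G : EReal → ℝ) (h : ℝ) : Prop :=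
  ∀ t : ℝ, 0 < t → t < 1 / h → G (t : EReal) ≤ F ((t + h : ℝ) : EReal) + h

def levySet (F G : EReal → ℝ) : Set ℝ :=
  {h : ℝ | 0 < h ∧ h ≤ 1 ∧ levyCond F G h ∧ levyCond G F h}

/-- The modified Lévy distance. -/
def dL (F G : EReal → ℝ) : ℝ := sInf (levySet F G)

/-- Weak convergence: pointwise convergence at each (real) continuity point of the limit. -/
def WeakConv (F : ℕ → EReal → ℝ) (G : EReal → ℝ) : Prop :=
  ∀ t : ℝ, ContinuousAt G (t : EReal) →
    Tendsto (fun n => F n (t : EReal)) atTop (𝓝 (G (t : EReal)))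

abbrev TriOp := (EReal → ℝ) → (EReal → ℝ) → (EReal → ℝ)

/-- A triangle function on `Δ⁺`. -/
def IsTriangleFn (star : TriOp) : Prop :=
  (∀ F L, IsDistFun F → IsDistFun L → IsDistFun (star F L)) ∧
  (∀ F L, IsDistFun F → IsDistFun L → star F L = star L F) ∧
  (∀ F L K, IsDistFun F → IsDistFun L → IsDistFun K →
    star F (star L K) = star (star F L) K) ∧
  (∀ F, IsDistFun F → star F H0 = F) ∧
  (∀ F L K, IsDistFun F → IsDistFun L → IsDistFun K → F ≤ L → star F K ≤ star L K)

/-- `⋆` is continuous with respect to weak convergence. -/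
def StarContinuous (star : TriOp) : Prop :=
  ∀ (Fn Ln : ℕ → EReal → ℝ) (F L : EReal → ℝ),
    (∀ n, IsDistFun (Fn n)) → (∀ n, IsDistFun (Ln n)) →
    IsDistFun F → IsDistFun L →
    WeakConv Fn F → WeakConv Ln L →
    WeakConv (fun n => star (Fn n) (Ln n)) (star F L)

/-- `⋆` is sup-continuous. -/
def StarSupContinuous (star : TriOp) : Prop :=
  ∀ (I : Type) (_ : Nonempty I) (F : I → EReal → ℝ) (L : EReal → ℝ),
    (∀ i, IsDistFun (F i)) → IsDistFun L →
    (fun t => ⨆ i, star (F i) L t) = star (fun t => ⨆ i, F i t) L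

/-- A probabilistic metric space `(G, D, ⋆)`. -/
structure PMSpace (G : Type) where
  star : TriOp
  D : G → G → EReal → ℝ
  star_tri : IsTriangleFn star
  D_mem : ∀ p q, IsDistFun (D p q)
  D_eq_iff : ∀ p q, D p q = H0 ↔ p = q
  D_symm : ∀ p q, D p q = D q p
  D_tri : ∀ p q r, star (D p q) (D q r) ≤ D p r

/-- Probabilistic 1-Lipschitz map. -/
def PLip {G : Type} (M : PMSpace G) (f : G → EReal → ℝ) : Prop :=
  (∀ x, IsDistFun (f x)) ∧ ∀ x y, M.star (M.D x y) (f y) ≤ f x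

/-- Probabilistically continuous map. -/
def PCont {G : Type} (M : PMSpace G) (f : G → EReal → ℝ) : Prop :=
  (∀ x, IsDistFun (f x)) ∧
  ∀ (z : G) (zn : ℕ → G),
    WeakConv (fun n => M.D (zn n) z) H0 →
    WeakConv (fun n => f (zn n)) (f z)

/-- The uniform modified Lévy distance `d_∞`. -/
def dInf {G : Type} (f g : G → EReal → ℝ) : ℝ := ⨆ x, dL (f x) (g x)

/-- Probabilistic Cauchy sequence: `D(z_n,z_p)(t) → H₀(t)` for all real `t`. -/
def PCauchy {G : Type} (M : PMSpace G) (z : ℕ → G) : Prop :=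
  ∀ t : ℝ, Tendsto (fun np : ℕ × ℕ => M.D (z np.1) (z np.2) (t : EReal))
    atTop (𝓝 (H0 (t : EReal)))

def PConvTo {G : Type} (M : PMSpace G) (z : ℕ → G) (w : G) : Prop :=
  ∀ t : ℝ, Tendsto (fun n => M.D (z n) w (t : EReal)) atTop (𝓝 (H0 (t : EReal)))

def PComplete {G : Type} (M : PMSpace G) : Prop :=
  ∀ z : ℕ → G, PCauchy M z → ∃ w, PConvTo M z w

/-- Compactness: complete and every strong `t`-neighborhood cover has a finite subcover. -/
def PCompact {G : Type} (M : PMSpace G) : Prop :=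
  PComplete M ∧ ∀ t : ℝ, 0 < t → ∃ A : Finset G, ∀ x : G, ∃ a ∈ A, M.D a x (t : EReal) > 1 - t

lemma isDistFun_iSup {I : Type} [Nonempty I] (F : I → EReal → ℝ)
    (h : ∀ i, IsDistFun (F i)) : IsDistFun (fun t => ⨆ i, F i t) := by
  have hbdd : ∀ t, BddAbove (Set.range fun i => F i t) := fun t =>
    ⟨1, by rintro _ ⟨i, rfl⟩; exact ((h i).2.1 t).2⟩
  have hmono : Monotone (fun t => ⨆ i, F i t) := fun s t hst =>
    ciSup_mono (hbdd t) (fun i => (h i).1 hst)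
  refine ⟨hmono, fun t => ⟨le_ciSup_of_le (hbdd t) (Classical.arbitrary I)
      ((h (Classical.arbitrary I)).2.1 t).1, ciSup_le fun i => ((h i).2.1 t).2⟩, ?_, ?_, ?_, ?_⟩
  · -- left continuity
    intro x
    have key : sSup ((fun t => ⨆ i, F i t) '' Set.Iio (x : EReal)) = ⨆ i, F i x := by
      have hne : (Set.Iio (x : EReal)).Nonempty := ⟨⊥, EReal.bot_lt_coe x⟩
      have hnb : (𝓝[<] (x : EReal)).NeBot := nhdsWithin_Iio_self_neBot' hne
      have hFi : ∀ i, sSup (F i '' Set.Iio (x : EReal)) = F i x := fun i =>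
        tendsto_nhds_unique ((h i).1.tendsto_nhdsLT (x : EReal)) ((h i).2.2.1 x)
      have hGbdd : BddAbove ((fun t => ⨆ i, F i t) '' Set.Iio (x : EReal)) :=
        ⟨1, by rintro _ ⟨s, _, rfl⟩; exact ciSup_le fun i => ((h i).2.1 s).2⟩
      apply le_antisymm
      · apply Real.sSup_le _ (le_ciSup_of_le (hbdd _) (Classical.arbitrary I)
          ((h (Classical.arbitrary I)).2.1 _).1)
        rintro _ ⟨s, hs, rfl⟩
        exact hmono (le_of_lt hs)
      · refine ciSup_le fun i => ?_
        rw [← hFi i]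
        refine Real.sSup_le ?_ ((le_ciSup_of_le (hbdd ⊥) i ((h i).2.1 ⊥).1).trans
          (le_csSup hGbdd ⟨⊥, EReal.bot_lt_coe x, rfl⟩))
        · rintro _ ⟨s, hs, rfl⟩
          exact le_trans (le_ciSup (hbdd s) i) (le_csSup hGbdd ⟨s, hs, rfl⟩)
    have := hmono.tendsto_nhdsLT (x : EReal)
    rw [key] at this
    exact this
  · simp only [(fun i => (h i).2.2.2.1)]; exact ciSup_const
  · simp only [(fun i => (h i).2.2.2.2.1)]; exact ciSup_const
  · simp only [(fun i => (h i).2.2.2.2.2)]; exact ciSup_const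

/-- For `⋆` sup-continuous, `x ↦ sup_{y ∈ A} (f(y) ⋆ D(x,y))` is probabilistic
1-Lipschitz and dominates `f` on `A`. -/
theorem stmt9 {G : Type} (M : PMSpace G) (hsup : StarSupContinuous M.star)
    (f : G → EReal → ℝ) (hf : ∀ x, IsDistFun (f x)) (A : Set G) (hA : A.Nonempty) :
    PLip M (fun x t => ⨆ y : A, M.star (f y) (M.D x y) t) ∧
    (∀ x ∈ A, f x ≤ fun t => ⨆ y : A, M.star (f y) (M.D x y) t) := by
  haveI : Nonempty A := hA.to_subtype
  set g : G → EReal → ℝ := fun x t => ⨆ y : A, M.star (f y) (M.D x y) t with hgdef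
  have hterm : ∀ x (y : A), IsDistFun (M.star (f y) (M.D x y)) := fun x y =>
    M.star_tri.1 _ _ (hf y) (M.D_mem x y)
  have hbdd : ∀ x t, BddAbove (Set.range fun y : A => M.star (f y) (M.D x y) t) := fun x t =>
    ⟨1, by rintro _ ⟨y, rfl⟩; exact ((hterm x y).2.1 t).2⟩
  have hg : ∀ x, IsDistFun (g x) := fun x => isDistFun_iSup _ (hterm x)
  have comm := M.star_tri.2.1
  have assoc := M.star_tri.2.2.1
  have mono := M.star_tri.2.2.2.2
  constructor
  · refine ⟨hg, fun x y => ?_⟩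
    have step1 : M.star (M.D x y) (g y) = M.star (g y) (M.D x y) :=
      comm _ _ (M.D_mem x y) (hg y)
    have step2 := hsup A ‹Nonempty A› (fun z : A => M.star (f z) (M.D y z)) (M.D x y)
      (hterm y) (M.D_mem x y)
    intro t
    rw [step1, ← step2]
    refine ciSup_le fun z => ?_
    have e1 : M.star (M.star (f z) (M.D y z)) (M.D x y)
        = M.star (M.star (M.D y z) (M.D x y)) (f z) := by
      rw [← assoc _ _ _ (hf z) (M.D_mem y z) (M.D_mem x y),
        comm _ _ (hf z) (M.star_tri.1 _ _ (M.D_mem y z) (M.D_mem x y))]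
    have e2 : M.star (M.D y z) (M.D x y) ≤ M.D x z := by
      rw [comm _ _ (M.D_mem y z) (M.D_mem x y)]
      exact M.D_tri x y z
    have e3 : M.star (M.star (M.D y z) (M.D x y)) (f z) ≤ M.star (M.D x z) (f z) :=
      mono _ _ _ (M.star_tri.1 _ _ (M.D_mem y z) (M.D_mem x y)) (M.D_mem x z) (hf z) e2
    have e4 : M.star (M.D x z) (f z) = M.star (f z) (M.D x z) :=
      comm _ _ (M.D_mem x z) (hf z)
    calc M.star (M.star (f z) (M.D y z)) (M.D x y) t
        = M.star (M.star (M.D y z) (M.D x y)) (f z) t := by rw [e1]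
      _ ≤ M.star (M.D x z) (f z) t := e3 t
      _ = M.star (f z) (M.D x z) t := by rw [e4]
      _ ≤ g x t := le_ciSup (hbdd x t) z
  · intro x hx t
    have e1 : M.star (f x) (M.D x x) = f x := by
      rw [(M.D_eq_iff x x).2 rfl]; exact M.star_tri.2.2.2.1 (f x) (hf x)
    calc f x t = M.star (f x) (M.D x x) t := by rw [e1]
      _ ≤ ⨆ y : A, M.star (f y) (M.D x y) t := le_ciSup (hbdd x t) ⟨x, hx⟩
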